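/- Every finitely generated residually free group G is a subgroup of a direct product of finitely many fully residually free groups: there exist k ∈ ℕ, a family of groups H₁, …, H_k each of which is fully residually free, and an injective group homomorphism G →* H₁ × ⋯ × H_k. -/

import Mathlib

/-- `LyndonC l f g = l f + l g - l (f⁻¹ * g)`, twice the Gromov product `c(f,g)`. -/
def LyndonC {G : Type*} [Group G] {Λ : Type*} [AddCommGroup Λ] [LinearOrder Λ]
    [IsOrderedAddMonoid Λ]
    (l : G → Λ) (f g : G) : Λ :=
  l f + l g - l (f⁻¹ * g)

/-- `l : G → Λ` is a Lyndon length function. -/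
structure IsLyndonLength {G : Type*} [Group G] {Λ : Type*} [AddCommGroup Λ] [LinearOrder Λ]
    [IsOrderedAddMonoid Λ]
    (l : G → Λ) : Prop where
  map_one : l 1 = 0
  nonneg : ∀ g : G, 0 ≤ l g
  map_inv : ∀ g : G, l g⁻¹ = l g
  isosceles : ∀ f g h : G, LyndonC l f g > LyndonC l f h → LyndonC l f h = LyndonC l g h
  two_divides : ∀ f g : G, ∃ a : Λ, LyndonC l f g = a + a

/-- A free Lyndon length function: additionally `l (g ^ 2) > l g` for all `g ≠ 1`. -/
def IsFreeLyndonLength {G : Type*} [Group G] {Λ : Type*} [AddCommGroup Λ] [LinearOrder Λ]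
    [IsOrderedAddMonoid Λ]
    (l : G → Λ) : Prop :=
  IsLyndonLength l ∧ ∀ g : G, g ≠ 1 → l g < l (g ^ 2)

/-- A regular Lyndon length function. -/
def IsRegularLyndonLength {G : Type*} [Group G] {Λ : Type*} [AddCommGroup Λ] [LinearOrder Λ]
    [IsOrderedAddMonoid Λ]
    (l : G → Λ) : Prop :=
  ∀ g f : G, ∃ u g₁ f₁ : G, g = u * g₁ ∧ f = u * f₁ ∧
    l g = l u + l g₁ ∧ l f = l u + l f₁ ∧ LyndonC l g f = l u + l u

/-- A group is finitely presented if it is isomorphic to a presented group on finitely many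
generators with finitely many relators. -/
def IsFinitelyPresented (G : Type*) [Group G] : Prop :=
  ∃ (n : ℕ) (R : Set (FreeGroup (Fin n))), R.Finite ∧ Nonempty (G ≃* PresentedGroup R)

/-- A group is residually free if every nontrivial element can be mapped to a nontrivial
element by some homomorphism to a free group. -/
def ResiduallyFree (G : Type*) [Group G] : Prop :=
  ∀ g : G, g ≠ 1 → ∃ (ι : Type) (φ : G →* FreeGroup ι), φ g ≠ 1

/-- A group is fully residually free if finite sets of nontrivial elements can be mapped to
nontrivial elements by homomorphisms to free groups. -/
def FullyResiduallyFree (G : Type*) [Group G] : Prop :=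
  ∀ S : Finset G, (∀ g ∈ S, g ≠ 1) →
    ∃ (ι : Type) (φ : G →* FreeGroup ι), ∀ g ∈ S, φ g ≠ 1


/- ————— Auxiliary development ————— -/

local notation "SL2" => Matrix.SpecialLinearGroup (Fin 2) ℤ


instance : MulAction SL2 (Fin 2 → ℤ) where
  smul g v := (g : Matrix (Fin 2) (Fin 2) ℤ).mulVec v
  one_smul v := by
    show ((1 : SL2) : Matrix (Fin 2) (Fin 2) ℤ).mulVec v = v
    simp
  mul_smul g h v := by
    show ((g * h : SL2) : Matrix (Fin 2) (Fin 2) ℤ).mulVec v =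
      ((g : Matrix (Fin 2) (Fin 2) ℤ).mulVec ((h : Matrix (Fin 2) (Fin 2) ℤ).mulVec v))
    rw [Matrix.SpecialLinearGroup.coe_mul, Matrix.mulVec_mulVec]

lemma SL2_smul_def (g : SL2) (v : Fin 2 → ℤ) :
    g • v = (g : Matrix (Fin 2) (Fin 2) ℤ).mulVec v := rfl

def Amat : SL2 := ⟨!![1,2;0,1], by simp [Matrix.det_fin_two_of]⟩
def Bmat : SL2 := ⟨!![1,0;2,1], by simp [Matrix.det_fin_two_of]⟩

lemma mat_mul_aux (a b c d e f g h : ℤ) :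
    !![a,b;c,d] * !![e,f;g,h] = !![a*e+b*g, a*f+b*h; c*e+d*g, c*f+d*h] := by
  ext i j
  fin_cases i <;> fin_cases j <;> simp [Matrix.mul_apply, Fin.sum_univ_two]

lemma Amat_zpow (k : ℤ) : ((Amat ^ k : SL2) : Matrix (Fin 2) (Fin 2) ℤ) = !![1,2*k;0,1] := by
  induction k using Int.induction_on with
  | zero => simp [Matrix.one_fin_two]
  | succ n ih =>
    rw [_root_.zpow_add, zpow_one, Matrix.SpecialLinearGroup.coe_mul, ih,
      show ((Amat : SL2) : Matrix (Fin 2) (Fin 2) ℤ) = !![1,2;0,1] from rfl, mat_mul_aux]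
    norm_num
    ring_nf
  | pred n ih =>
    rw [sub_eq_add_neg, _root_.zpow_add, Matrix.SpecialLinearGroup.coe_mul, ih]
    have h1 : ((Amat ^ (-1 : ℤ) : SL2) : Matrix (Fin 2) (Fin 2) ℤ) = !![1,-2;0,1] := by
      rw [_root_.zpow_neg_one, Matrix.SpecialLinearGroup.coe_inv,
        show ((Amat : SL2) : Matrix (Fin 2) (Fin 2) ℤ) = !![1,2;0,1] from rfl,
        Matrix.adjugate_fin_two]
      norm_num
    rw [h1, mat_mul_aux]
    norm_num
    ring_nf
  
lemma Bmat_zpow (k : ℤ) : ((Bmat ^ k : SL2) : Matrix (Fin 2) (Fin 2) ℤ) = !![1,0;2*k,1] := by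
  induction k using Int.induction_on with
  | zero => simp [Matrix.one_fin_two]
  | succ n ih =>
    rw [_root_.zpow_add, zpow_one, Matrix.SpecialLinearGroup.coe_mul, ih,
      show ((Bmat : SL2) : Matrix (Fin 2) (Fin 2) ℤ) = !![1,0;2,1] from rfl, mat_mul_aux]
    norm_num
    ring_nf
  | pred n ih =>
    rw [sub_eq_add_neg, _root_.zpow_add, Matrix.SpecialLinearGroup.coe_mul, ih]
    have h1 : ((Bmat ^ (-1 : ℤ) : SL2) : Matrix (Fin 2) (Fin 2) ℤ) = !![1,0;-2,1] := by
      rw [_root_.zpow_neg_one, Matrix.SpecialLinearGroup.coe_inv,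
        show ((Bmat : SL2) : Matrix (Fin 2) (Fin 2) ℤ) = !![1,0;2,1] from rfl,
        Matrix.adjugate_fin_two]
      norm_num
    rw [h1, mat_mul_aux]
    norm_num
    ring_nf

lemma Amat_zpow_smul (k : ℤ) (v : Fin 2 → ℤ) :
    (Amat ^ k) • v = ![v 0 + 2*k * v 1, v 1] := by
  rw [SL2_smul_def, Amat_zpow]
  ext i
  fin_cases i <;>
    simp [Matrix.mulVec, dotProduct, Fin.sum_univ_two]

lemma Bmat_zpow_smul (k : ℤ) (v : Fin 2 → ℤ) :
    (Bmat ^ k) • v = ![v 0, 2*k * v 0 + v 1] := by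
  rw [SL2_smul_def, Bmat_zpow]
  ext i
  fin_cases i <;>
    simp [Matrix.mulVec, dotProduct, Fin.sum_univ_two]

def Uset : Set (Fin 2 → ℤ) := {v | |v 1| < |v 0|}
def Vset : Set (Fin 2 → ℤ) := {v | |v 0| < |v 1|}

lemma abs_aux {k x y : ℤ} (hk : k ≠ 0) (h : |x| < |y|) : |y| < |x + 2*k*y| := by
  have h1 : (1:ℤ) ≤ |k| := Int.one_le_abs hk
  have h2 : |2*k*y| = 2 * |k| * |y| := by rw [abs_mul, abs_mul]; norm_num
  have h3 : |2*k*y| - |(-x)| ≤ |2*k*y - (-x)| := abs_sub_abs_le_abs_sub _ _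
  rw [abs_neg, sub_neg_eq_add] at h3
  have h4 : |2*k*y + x| = |x + 2*k*y| := by rw [add_comm]
  rw [h4] at h3
  nlinarith [abs_nonneg x, abs_nonneg y]

lemma Amat_maps (k : ℤ) (hk : k ≠ 0) {v : Fin 2 → ℤ} (hv : v ∈ Vset) :
    (Amat ^ k) • v ∈ Uset := by
  rw [Amat_zpow_smul]
  simp only [Uset, Set.mem_setOf_eq, Matrix.cons_val_one, Matrix.head_cons, Matrix.cons_val_zero]
  exact abs_aux hk hv

lemma Bmat_maps (k : ℤ) (hk : k ≠ 0) {v : Fin 2 → ℤ} (hv : v ∈ Uset) :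
    (Bmat ^ k) • v ∈ Vset := by
  rw [Bmat_zpow_smul]
  simp only [Vset, Set.mem_setOf_eq, Matrix.cons_val_one, Matrix.head_cons, Matrix.cons_val_zero]
  rw [add_comm]
  exact abs_aux hk hv

lemma Uset_nonempty : Uset.Nonempty := by
  refine ⟨![1, 0], ?_⟩
  simp [Uset]

lemma UV_disj : ∀ v, v ∈ Uset → v ∉ Vset := by
  intro v hu hv
  rw [Uset, Set.mem_setOf_eq] at hu
  rw [Vset, Set.mem_setOf_eq] at hv
  exact absurd hv (not_lt.2 (le_of_lt hu))
open Pointwise Cardinal Monoid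

noncomputable def Cgen : ℕ → SL2 := fun n => Bmat ^ n * Amat * (Bmat ^ n)⁻¹

def Xset : ℕ → Set (Fin 2 → ℤ) := fun n => (Bmat ^ (n:ℤ)) • Uset

lemma Cgen_zpow (n : ℕ) (k : ℤ) :
    Cgen n ^ k = Bmat ^ (n:ℤ) * Amat ^ k * (Bmat ^ (n:ℤ))⁻¹ := by
  rw [show Bmat ^ (n:ℤ) = Bmat ^ n from zpow_natCast _ _,
    show Cgen n = MulAut.conj (Bmat ^ n) Amat from by rw [MulAut.conj_apply, Cgen],
    ← map_zpow, MulAut.conj_apply]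

lemma Xset_nonempty (n : ℕ) : (Xset n).Nonempty := by
  obtain ⟨u, hu⟩ := Uset_nonempty
  exact ⟨_, Set.smul_mem_smul_set hu⟩

lemma Xset_disj : Pairwise (Function.onFun Disjoint Xset) := by
  intro n m hnm
  rw [Function.onFun, Set.disjoint_left]
  rintro x ⟨u, hu, rfl⟩ ⟨u', hu', heq⟩
  have h1 : (Bmat ^ ((m:ℤ) - n)) • u' = u := by
    have h2 : ((Bmat ^ (n:ℤ))⁻¹ * Bmat ^ (m:ℤ)) • u' = u := by
      rw [mul_smul]; rw [show (Bmat ^ (m:ℤ)) • u' = (Bmat ^ (n:ℤ)) • u from heq]; exact inv_smul_smul _ _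
    rw [← h2, sub_eq_neg_add, _root_.zpow_add, _root_.zpow_neg]
  have hne : (m:ℤ) - n ≠ 0 := sub_ne_zero.2 (by exact_mod_cast hnm.symm)
  have : u ∈ Vset := h1 ▸ Bmat_maps _ hne hu'
  exact UV_disj u hu this

lemma Cgen_ping (n m : ℕ) (hnm : n ≠ m) (k : ℤ) (hk : k ≠ 0) :
    (Cgen n ^ k) • Xset m ⊆ Xset n := by
  rintro x ⟨y, ⟨u, hu, rfl⟩, rfl⟩
  have key : Cgen n ^ k * Bmat ^ (m:ℤ) = Bmat ^ (n:ℤ) * (Amat ^ k * Bmat ^ ((m:ℤ) - n)) := by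
    rw [Cgen_zpow]
    group
  have : (Cgen n ^ k) • (Bmat ^ (m:ℤ)) • u
      = (Bmat ^ (n:ℤ)) • (Amat ^ k) • (Bmat ^ ((m:ℤ) - n)) • u := by
    rw [smul_smul, key, ← smul_smul, ← smul_smul]
  show (Cgen n ^ k) • (Bmat ^ (m:ℤ)) • u ∈ Xset n
  rw [this]
  have hmn : (m:ℤ) - n ≠ 0 := sub_ne_zero.2 (by exact_mod_cast hnm.symm)
  exact Set.smul_mem_smul_set (Amat_maps k hk (Bmat_maps _ hmn hu))

noncomputable def eSL : FreeGroup ℕ →* SL2 := FreeGroup.lift Cgen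

theorem eSL_injective : Function.Injective eSL := by
  have heq : eSL = (CoprodI.lift fun i : ℕ => FreeGroup.lift fun _ : Unit => Cgen i).comp
      (@freeGroupEquivCoprodI ℕ).toMonoidHom := by
    ext i
    simp [eSL]
  rw [heq, MonoidHom.coe_comp]
  refine Function.Injective.comp ?_ (MulEquiv.injective _)
  let H : ℕ → Type := fun _ => FreeGroup Unit
  let f : ∀ i, H i →* SL2 := fun i => FreeGroup.lift fun _ => Cgen i
  apply CoprodI.lift_injective_of_ping_pong f ?_ Xset Xset_nonempty Xset_disj
  · intro i j hij
    refine FreeGroup.freeGroupUnitEquivInt.forall_congr_left.mpr ?_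
    intro n hne1
    change FreeGroup.lift (fun _ => Cgen i) (FreeGroup.of () ^ n) • Xset j ⊆ Xset i
    simp only [map_zpow, FreeGroup.lift_apply_of]
    have hnne0 : n ≠ 0 := by
      rintro rfl
      apply hne1
      simp [H, FreeGroup.freeGroupUnitEquivInt]
    exact Cgen_ping i j hij n hnne0
  · left
    have : (3 : Cardinal) = ((3:ℕ) : Cardinal) := by norm_num
    rw [Cardinal.mk_nat, this]
    exact le_of_lt (Cardinal.nat_lt_aleph0 3)

universe u

section Prelim

lemma freeGroup_countable {β : Type*} [Countable β] : Countable (FreeGroup β) := by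
  classical
  exact FreeGroup.toWord_injective.countable

lemma countable_of_fg {G : Type u} [Group G] (hfg : Group.FG G) : Countable G := by
  obtain ⟨S, hS⟩ := hfg.out
  have hsur : Function.Surjective (FreeGroup.lift (fun s : ↥S => (s : G))) := by
    rw [← MonoidHom.range_eq_top, FreeGroup.range_lift_eq_closure]
    have h1 : (Set.range fun s : ↥S => (s : G)) = (S : Set G) := Subtype.range_coe
    rw [h1]
    exact hS
  haveI : Countable (FreeGroup ↥S) := freeGroup_countable
  exact hsur.countable

lemma mk_mem_closure {ι : Type} (T : Set ι) :
    ∀ (L : List (ι × Bool)), (∀ p ∈ L, p.1 ∈ T) →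
      FreeGroup.mk L ∈ Subgroup.closure (FreeGroup.of '' T) := by
  intro L
  induction L with
  | nil => intro _; rw [← FreeGroup.one_eq_mk]; exact one_mem _
  | cons p L ih =>
    intro hmem
    have h1 : FreeGroup.mk (p :: L) = FreeGroup.mk [p] * FreeGroup.mk L := by
      rw [FreeGroup.mul_mk]; rfl
    rw [h1]
    refine mul_mem ?_ (ih fun q hq => hmem q (List.mem_cons_of_mem _ hq))
    have hp : p.1 ∈ T := hmem p (List.mem_cons_self)
    rcases p with ⟨x, b⟩
    cases b with
    | true => exact Subgroup.subset_closure ⟨x, hp, rfl⟩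
    | false =>
      have h2 : FreeGroup.mk [(x, false)] = (FreeGroup.of x)⁻¹ := by
        rw [show FreeGroup.of x = FreeGroup.mk [(x, true)] from rfl, FreeGroup.inv_mk]
        rfl
      rw [h2]
      exact inv_mem (Subgroup.subset_closure ⟨x, hp, rfl⟩)

lemma exists_factor {G : Type u} [Group G] (hfg : Group.FG G) {ι : Type}
    (φ : G →* FreeGroup ι) : ∃ ψ : G →* FreeGroup ℕ, ∀ g : G, ψ g = 1 ↔ φ g = 1 := by
  classical
  obtain ⟨S, hS⟩ := hfg.out
  set T : Finset ι := S.biUnion (fun s => ((φ s).toWord.map Prod.fst).toFinset) with hT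
  set fh : ι → FreeGroup ℕ :=
    fun x => if hx : x ∈ T then FreeGroup.of ((T.equivFin ⟨x, hx⟩ : Fin _) : ℕ) else 1 with hfh
  set hhom : FreeGroup ι →* FreeGroup ℕ := FreeGroup.lift fh with hhhom
  set fk : ℕ → FreeGroup ι :=
    fun m => if hm : m < T.card then FreeGroup.of ((T.equivFin.symm ⟨m, hm⟩ : ↥T) : ι) else 1
    with hfk
  set khom : FreeGroup ℕ →* FreeGroup ι := FreeGroup.lift fk with hkhom
  have hretr : ∀ x ∈ T, khom (hhom (FreeGroup.of x)) = FreeGroup.of x := by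
    intro x hx
    rw [hhhom, FreeGroup.lift_apply_of, hfh]
    simp only [dif_pos hx]
    rw [hkhom, FreeGroup.lift_apply_of, hfk]
    have hlt : ((T.equivFin ⟨x, hx⟩ : Fin T.card) : ℕ) < T.card := (T.equivFin ⟨x, hx⟩).isLt
    simp only [dif_pos hlt]
    have h2 : (⟨((T.equivFin ⟨x, hx⟩ : Fin T.card) : ℕ), hlt⟩ : Fin T.card)
        = T.equivFin ⟨x, hx⟩ := Fin.ext rfl
    rw [h2, Equiv.symm_apply_apply]
  have hsub : ∀ g : G, φ g ∈ Subgroup.closure (FreeGroup.of '' (T : Set ι)) := by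
    intro g
    have hg : g ∈ Subgroup.closure (S : Set G) := hS ▸ Subgroup.mem_top g
    have h3 : φ g ∈ Subgroup.map φ (Subgroup.closure (S : Set G)) :=
      Subgroup.mem_map_of_mem φ hg
    rw [MonoidHom.map_closure] at h3
    have h4 : Subgroup.closure (φ '' (S : Set G))
        ≤ Subgroup.closure (FreeGroup.of '' (T : Set ι)) := by
      rw [Subgroup.closure_le]
      rintro _ ⟨s, hs, rfl⟩
      rw [← FreeGroup.mk_toWord (x := φ s)]
      refine mk_mem_closure _ _ fun p hp => ?_
      refine Finset.mem_biUnion.2 ⟨s, hs, ?_⟩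
      exact List.mem_toFinset.2 (List.mem_map_of_mem (f := Prod.fst) hp)
    exact h4 h3
  have hfix : ∀ g : G, khom (hhom (φ g)) = φ g := by
    intro g
    refine Subgroup.closure_induction (p := fun w _ => khom (hhom w) = w) ?_ ?_ ?_ ?_ (hsub g)
    · rintro _ ⟨x, hx, rfl⟩
      exact hretr x hx
    · simp
    · intro x y _ _ ihx ihy
      simp [map_mul, ihx, ihy]
    · intro x _ ihx
      simp [map_inv, ihx]
  refine ⟨hhom.comp φ, fun g => ⟨fun h1 => ?_, fun h1 => by simp [MonoidHom.comp_apply, h1]⟩⟩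
  have h5 := hfix g
  rw [MonoidHom.comp_apply] at h1
  rw [h1, _root_.map_one] at h5
  exact h5.symm

lemma FullyResiduallyFree.of_retract {H1 : Type*} {H2 : Type*} [Group H1] [Group H2]
    (f : H1 →* H2) (g : H2 →* H1) (hfg : ∀ y, f (g y) = y)
    (h : FullyResiduallyFree H1) : FullyResiduallyFree H2 := by
  classical
  intro S hS
  obtain ⟨ι, φ, hφ⟩ := h (S.image g) (by
    intro x hx
    obtain ⟨y, hy, rfl⟩ := Finset.mem_image.1 hx
    intro h1
    refine hS y hy ?_
    rw [← hfg y, h1, map_one])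
  refine ⟨ι, φ.comp g, fun y hy => ?_⟩
  exact hφ _ (Finset.mem_image_of_mem _ hy)

/-- Every countable group has an isomorphic copy in `Type 0`. -/
theorem exists_small_copy (X : Type u) [Group X] [Countable X] :
    ∃ (Y : Type) (_ : Group Y) (f : X →* Y) (g : Y →* X),
      (∀ x, g (f x) = x) ∧ (∀ y, f (g y) = y) := by
  obtain ⟨j, hj⟩ := exists_injective_nat X
  let e : X ≃ Set.range j := Equiv.ofInjective j hj
  letI gY : Group (Set.range j) :=
    { mul := fun a b => e (e.symm a * e.symm b)
      one := e 1
      inv := fun a => e ((e.symm a)⁻¹)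
      mul_assoc := fun a b c => by
        show e (e.symm (e (e.symm a * e.symm b)) * e.symm c)
          = e (e.symm a * e.symm (e (e.symm b * e.symm c)))
        simp [mul_assoc]
      one_mul := fun a => by
        show e (e.symm (e 1) * e.symm a) = a
        simp
      mul_one := fun a => by
        show e (e.symm a * e.symm (e 1)) = a
        simp
      inv_mul_cancel := fun a => by
        show e (e.symm (e (e.symm a)⁻¹) * e.symm a) = e 1
        simp }
  refine ⟨Set.range j, gY,
    { toFun := e, map_one' := rfl, map_mul' := fun a b => by
        show e (a * b) = e (e.symm (e a) * e.symm (e b))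
        simp },
    { toFun := e.symm, map_one' := by show e.symm (e 1) = 1; simp,
      map_mul' := fun a b => by
        show e.symm (e (e.symm a * e.symm b)) = e.symm a * e.symm b
        simp },
    fun x => e.symm_apply_apply x, fun y => e.apply_symm_apply y⟩

end Prelim

section Main

variable {G : Type u} [Group G]

/-- evaluation of a formal word -/
def evL {β : Type*} (f : β → G) (L : List (β × Bool)) : G :=
  (L.map fun p => cond p.2 (f p.1) (f p.1)⁻¹).prod

lemma evL_nil {β : Type*} (f : β → G) : evL f [] = 1 := rfl

lemma evL_cons {β : Type*} (f : β → G) (p) (L) :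
    evL f (p :: L) = (cond p.2 (f p.1) (f p.1)⁻¹) * evL f L := by
  simp [evL]

lemma evL_append {β : Type*} (f : β → G) (L1 L2) :
    evL f (L1 ++ L2) = evL f L1 * evL f L2 := by
  simp [evL]

lemma evL_invRev {β : Type*} (f : β → G) :
    ∀ L, evL f ((L.map fun p => (p.1, !p.2)).reverse) = (evL f L)⁻¹ := by
  intro L
  induction L with
  | nil => simp [evL]
  | cons p L ih =>
    rw [List.map_cons, List.reverse_cons, evL_append, ih, evL_cons f p L, _root_.mul_inv_rev]
    congr 1
    rcases p with ⟨x, b⟩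
    cases b <;> simp [evL]

variable (S : Finset G)

lemma exists_word (hS : Subgroup.closure (S : Set G) = ⊤) (g : G) :
    ∃ L : List (↥S × Bool), g = evL (fun s : ↥S => (s : G)) L := by
  have hg : g ∈ Subgroup.closure (S : Set G) := hS ▸ Subgroup.mem_top g
  refine Subgroup.closure_induction
    (p := fun w _ => ∃ L : List (↥S × Bool), w = evL (fun s : ↥S => (s : G)) L)
    ?_ ?_ ?_ ?_ hg
  · intro x hx
    exact ⟨[(⟨x, hx⟩, true)], by simp [evL]⟩
  · exact ⟨[], rfl⟩
  · rintro x y _ _ ⟨L1, rfl⟩ ⟨L2, rfl⟩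
    exact ⟨L1 ++ L2, (evL_append _ _ _).symm⟩
  · rintro x _ ⟨L, rfl⟩
    exact ⟨_, (evL_invRev _ L).symm⟩

/-- The polynomial ring of the representation variety. -/
abbrev RRing : Type u := MvPolynomial (↥S × Fin 2 × Fin 2) ℤ

/-- generic matrices -/
noncomputable def Xmat (s : ↥S) : Matrix (Fin 2) (Fin 2) (RRing S) :=
  Matrix.of fun i j => MvPolynomial.X (s, i, j)

/-- matrix of a formal word, with adjugates as formal inverses -/
noncomputable def wordMat (L : List (↥S × Bool)) : Matrix (Fin 2) (Fin 2) (RRing S) :=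
  (L.map fun p => cond p.2 (Xmat S p.1) (Matrix.adjugate (Xmat S p.1))).prod

/-- the point of the representation variety attached to `ρ` -/
def ptOf (ρ : G →* SL2) : ↥S × Fin 2 × Fin 2 → ℤ :=
  fun v => ((ρ v.1 : SL2) : Matrix (Fin 2) (Fin 2) ℤ) v.2.1 v.2.2

noncomputable def evalHom (ρ : G →* SL2) : RRing S →+* ℤ := MvPolynomial.eval (ptOf S ρ)

lemma eval_wordMat (ρ : G →* SL2) (L : List (↥S × Bool)) :
    (evalHom S ρ).mapMatrix (wordMat S L)
      = ((ρ (evL (fun s : ↥S => (s : G)) L) : SL2) : Matrix (Fin 2) (Fin 2) ℤ) := by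
  induction L with
  | nil =>
    rw [show wordMat S [] = 1 from rfl, evL_nil, _root_.map_one, _root_.map_one,
      Matrix.SpecialLinearGroup.coe_one]
  | cons p L ih =>
    rw [show wordMat S (p :: L)
        = (cond p.2 (Xmat S p.1) (Matrix.adjugate (Xmat S p.1))) * wordMat S L by
      simp [wordMat], _root_.map_mul, ih, evL_cons, _root_.map_mul,
      Matrix.SpecialLinearGroup.coe_mul]
    congr 1
    have hX : (evalHom S ρ).mapMatrix (Xmat S p.1)
        = ((ρ p.1 : SL2) : Matrix (Fin 2) (Fin 2) ℤ) := by
      ext i j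
      simp [RingHom.mapMatrix_apply, Matrix.map_apply, Xmat, evalHom, ptOf]
    rcases p with ⟨s, b⟩
    cases b with
    | true => simpa using hX
    | false =>
      show (evalHom S ρ).mapMatrix (Matrix.adjugate (Xmat S s)) = _
      rw [RingHom.map_adjugate, hX, ← Matrix.SpecialLinearGroup.coe_inv, ← map_inv]
      rfl

variable (hS : Subgroup.closure (S : Set G) = ⊤)

/-- a chosen word representing `g` -/
noncomputable def wordOf (g : G) : List (↥S × Bool) := (exists_word S hS g).choose

lemma wordOf_spec (g : G) : g = evL (fun s : ↥S => (s : G)) (wordOf S hS g) :=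
  (exists_word S hS g).choose_spec

/-- the polynomials attached to the chosen word of `g` -/
def polysOf (g : G) : Set (RRing S) :=
  {q | ∃ i j : Fin 2, q = wordMat S (wordOf S hS g) i j
    - (1 : Matrix (Fin 2) (Fin 2) (RRing S)) i j}

/-- the ideal attached to a subgroup -/
noncomputable def JId (N : Subgroup G) : Ideal (RRing S) :=
  Ideal.span (⋃ g ∈ (N : Set G), polysOf S hS g)

lemma JId_mono {N M : Subgroup G} (h : N ≤ M) : JId S hS N ≤ JId S hS M :=
  Ideal.span_mono (Set.biUnion_subset_biUnion_left h)

lemma polysOf_subset_JId {N : Subgroup G} {g : G} (hg : g ∈ N) :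
    polysOf S hS g ⊆ (JId S hS N : Set (RRing S)) :=
  fun q hq => Ideal.subset_span (Set.mem_biUnion hg hq)

lemma eval_eq_zero_of_mem_JId {N : Subgroup G} (ρ : G →* SL2) (hρ : ∀ g ∈ N, ρ g = 1)
    {q : RRing S} (hq : q ∈ JId S hS N) : evalHom S ρ q = 0 := by
  have hle : JId S hS N ≤ RingHom.ker (evalHom S ρ) := by
    rw [JId, Ideal.span_le]
    rintro q' hq'
    obtain ⟨g, hgN, i, j, rfl⟩ : ∃ g ∈ N, ∃ i j : Fin 2,
        q' = wordMat S (wordOf S hS g) i j - (1 : Matrix (Fin 2) (Fin 2) (RRing S)) i j := by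
      obtain ⟨g, hgN, hq'⟩ := Set.mem_iUnion₂.1 hq'
      exact ⟨g, hgN, hq'⟩
    rw [SetLike.mem_coe, RingHom.mem_ker, map_sub]
    have h1 : evalHom S ρ (wordMat S (wordOf S hS g) i j)
        = ((ρ g : SL2) : Matrix (Fin 2) (Fin 2) ℤ) i j := by
      have h' := congrFun (congrFun (eval_wordMat S ρ (wordOf S hS g)) i) j
      simp only [RingHom.mapMatrix_apply, Matrix.map_apply] at h'
      rw [h', ← wordOf_spec S hS g]
    have h2 : evalHom S ρ ((1 : Matrix (Fin 2) (Fin 2) (RRing S)) i j)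
        = (1 : Matrix (Fin 2) (Fin 2) ℤ) i j := by
      rw [Matrix.one_apply, Matrix.one_apply, apply_ite (evalHom S ρ), map_one, map_zero]
    rw [h1, h2, hρ g hgN, Matrix.SpecialLinearGroup.coe_one, sub_self]
  exact hle hq

lemma eq_one_of_polys_mem {N : Subgroup G} {g : G}
    (hp : polysOf S hS g ⊆ (JId S hS N : Set (RRing S)))
    (ρ : G →* SL2) (hρ : ∀ x ∈ N, ρ x = 1) : ρ g = 1 := by
  have hmat : ((ρ g : SL2) : Matrix (Fin 2) (Fin 2) ℤ) = 1 := by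
    ext i j
    have h0 := eval_eq_zero_of_mem_JId S hS ρ hρ (hp (⟨i, j, rfl⟩ : _ ∈ polysOf S hS g))
    rw [map_sub] at h0
    have h1 : evalHom S ρ (wordMat S (wordOf S hS g) i j)
        = ((ρ g : SL2) : Matrix (Fin 2) (Fin 2) ℤ) i j := by
      have h' := congrFun (congrFun (eval_wordMat S ρ (wordOf S hS g)) i) j
      simp only [RingHom.mapMatrix_apply, Matrix.map_apply] at h'
      rw [h', ← wordOf_spec S hS g]
    have h2 : evalHom S ρ ((1 : Matrix (Fin 2) (Fin 2) (RRing S)) i j)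
        = (1 : Matrix (Fin 2) (Fin 2) ℤ) i j := by
      rw [Matrix.one_apply, Matrix.one_apply, apply_ite (evalHom S ρ), map_one, map_zero]
    rw [h1, h2] at h0
    have := sub_eq_zero.1 h0
    rw [this]
  refine Subtype.coe_injective ?_
  show ((ρ g : SL2) : Matrix (Fin 2) (Fin 2) ℤ) = ((1 : SL2) : Matrix (Fin 2) (Fin 2) ℤ)
  rw [hmat, Matrix.SpecialLinearGroup.coe_one]

end Main

section Closure

variable {G : Type u} [Group G]

/-- the residually-free closure of `N` -/
noncomputable def clN (N : Subgroup G) : Subgroup G :=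
  ⨅ ψ : {ψ : G →* FreeGroup ℕ // N ≤ ψ.ker}, ψ.1.ker

lemma le_clN (N : Subgroup G) : N ≤ clN N := le_iInf fun ψ => ψ.2

lemma clN_le_ker {N : Subgroup G} (ψ : G →* FreeGroup ℕ) (h : N ≤ ψ.ker) : clN N ≤ ψ.ker :=
  iInf_le (fun ψ : {ψ : G →* FreeGroup ℕ // N ≤ ψ.ker} => ψ.1.ker) ⟨ψ, h⟩

lemma mem_clN {N : Subgroup G} {g : G} :
    g ∈ clN N ↔ ∀ ψ : G →* FreeGroup ℕ, N ≤ ψ.ker → ψ g = 1 := by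
  rw [clN, Subgroup.mem_iInf]
  exact ⟨fun h ψ hψ => h ⟨ψ, hψ⟩, fun h ψ => h ψ.1 ψ.2⟩

lemma clN_normal (N : Subgroup G) : (clN N).Normal := by
  constructor
  intro x hx g
  simp only [clN, Subgroup.mem_iInf] at hx ⊢
  intro ψ
  exact ψ.1.normal_ker.conj_mem x (hx ψ) g

lemma clN_idem (N : Subgroup G) : clN (clN N) = clN N := by
  refine le_antisymm ?_ (le_clN _)
  exact le_iInf fun ψ => clN_le_ker ψ.1 (iInf_le _ ψ)

end Closure

/-- a bundled group in universe `u` -/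
structure GrpB : Type (u + 1) where
  carrier : Type u
  str : Group carrier

instance : CoeSort GrpB.{u} (Type u) := ⟨GrpB.carrier⟩

instance (X : GrpB.{u}) : Group X := X.str

/-- `N` is the intersection of the kernels of finitely many homs onto fully residually free
countable groups. -/
def GoodFam {G : Type u} [Group G] (N : Subgroup G) : Prop :=
  ∃ (ι : Type u) (_ : Finite ι) (H : ι → GrpB.{u}) (φ : ∀ i, G →* (H i)),
    (∀ i, FullyResiduallyFree (H i)) ∧ (∀ i, Countable (H i)) ∧ (⨅ i, (φ i).ker) = N

theorem goodFam_of_closed {G : Type u} [Group G] (hfg : Group.FG G) :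
    ∀ N : Subgroup G, N.Normal → clN N = N → GoodFam N := by
  classical
  obtain ⟨S, hS⟩ := hfg.out
  have hcntG : Countable G := countable_of_fg hfg
  have hwf : WellFounded ((· > ·) : Ideal (RRing S) → Ideal (RRing S) → Prop) :=
    (inferInstance : WellFoundedGT (Ideal (RRing S))).wf
  suffices h : ∀ I : Ideal (RRing S), ∀ N : Subgroup G, N.Normal → clN N = N →
      JId S hS N = I → GoodFam N by
    intro N h1 h2
    exact h _ N h1 h2 rfl
  intro I
  refine hwf.induction
    (C := fun I => ∀ N : Subgroup G, N.Normal → clN N = N → JId S hS N = I → GoodFam N) I ?_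
  clear I
  intro I IH N hNorm hclosed hJ
  subst hJ
  by_cases hFRF : ∀ F : Finset G, (∀ g ∈ F, g ∉ N) →
      ∃ ψ : G →* FreeGroup ℕ, N ≤ ψ.ker ∧ ∀ g ∈ F, ψ g ≠ 1
  · haveI := hNorm
    refine ⟨PUnit, inferInstance, fun _ => ⟨G ⧸ N, inferInstance⟩,
      fun _ => QuotientGroup.mk' N, fun _ => ?_,
      fun _ => (QuotientGroup.mk'_surjective N).countable, ?_⟩
    · -- the quotient is fully residually free
      intro F hF
      set F' : Finset G := F.image Quotient.out with hF'def
      have hF' : ∀ g ∈ F', g ∉ N := by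
        intro g hg
        obtain ⟨q, hq, rfl⟩ := Finset.mem_image.1 hg
        intro hgN
        refine hF q hq ?_
        rw [← QuotientGroup.out_eq' q]
        exact (QuotientGroup.eq_one_iff _).2 hgN
      obtain ⟨ψ, hψ1, hψ2⟩ := hFRF F' hF'
      refine ⟨ℕ, QuotientGroup.lift N ψ (fun x hx => hψ1 hx), fun q hq => ?_⟩
      rw [← QuotientGroup.out_eq' q, QuotientGroup.lift_mk']
      exact hψ2 _ (Finset.mem_image_of_mem _ hq)
    · rw [iInf_const, QuotientGroup.ker_mk']
  · push_neg at hFRF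
    obtain ⟨F, hF1, hF2⟩ := hFRF
    have hM : ∀ s : {x // x ∈ F}, GoodFam (clN (N ⊔ Subgroup.normalClosure {(s : G)})) := by
      intro s
      have hNM : N ≤ clN (N ⊔ Subgroup.normalClosure {(s:G)}) :=
        le_trans le_sup_left (le_clN _)
      have hsM : (s : G) ∈ clN (N ⊔ Subgroup.normalClosure {(s:G)}) :=
        le_clN _ (le_sup_right (α := Subgroup G)
          (Subgroup.subset_normalClosure (Set.mem_singleton _)))
      have hql : ∃ q ∈ polysOf S hS (s:G), q ∉ JId S hS N := by
        by_contra hq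
        push_neg at hq
        have hsN : (s:G) ∈ N := by
          rw [← hclosed, mem_clN]
          intro ψ hψ
          have hkill : ∀ x ∈ N, (eSL.comp ψ) x = 1 := by
            intro x hx
            have : ψ x = 1 := hψ hx
            simp [MonoidHom.comp_apply, this]
          have h1 := eq_one_of_polys_mem S hS (N := N) (fun q hq' => hq q hq') (eSL.comp ψ) hkill
          apply eSL_injective
          simpa using h1
        exact hF1 s s.2 hsN
      obtain ⟨q, hq1, hq2⟩ := hql
      have hlt : JId S hS N < JId S hS (clN (N ⊔ Subgroup.normalClosure {(s:G)})) := by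
        refine lt_of_le_of_ne (JId_mono S hS hNM) fun heq => hq2 ?_
        rw [heq]
        exact polysOf_subset_JId S hS hsM hq1
      exact IH _ hlt _ (clN_normal _) (clN_idem _) rfl
    choose ι fin H φ hFRF' hcnt' hker using hM
    haveI : ∀ s : {x // x ∈ F}, Finite (ι s) := fin
    refine ⟨Σ s : {x // x ∈ F}, ι s, inferInstance, fun p => H p.1 p.2,
      fun p => φ p.1 p.2, fun p => hFRF' p.1 p.2, fun p => hcnt' p.1 p.2, ?_⟩
    rw [iInf_sigma]
    have h1 : (⨅ (s : {x // x ∈ F}) (i : ι s), (φ s i).ker)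
        = ⨅ s : {x // x ∈ F}, clN (N ⊔ Subgroup.normalClosure {(s:G)}) :=
      iInf_congr hker
    rw [h1]
    apply le_antisymm
    · intro g hg
      rw [Subgroup.mem_iInf] at hg
      by_contra hgN
      have hgcl : ¬ g ∈ clN N := by
        rw [hclosed]
        exact hgN
      obtain ⟨ψ, hψker, hψg⟩ : ∃ ψ : G →* FreeGroup ℕ, N ≤ ψ.ker ∧ ψ g ≠ 1 := by
        by_contra hc
        push_neg at hc
        exact hgcl (mem_clN.2 fun ψ hψ => hc ψ hψ)
      obtain ⟨s0, hs0F, hs0⟩ := hF2 ψ hψker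
      have hMker : clN (N ⊔ Subgroup.normalClosure {s0}) ≤ ψ.ker := by
        apply clN_le_ker
        refine sup_le hψker ?_
        refine Subgroup.normalClosure_le_normal ?_
        rw [Set.singleton_subset_iff]
        exact hs0
      exact hψg (hMker (hg ⟨s0, hs0F⟩))
    · exact le_iInf fun s => le_trans le_sup_left (le_clN _)

theorem final_embedding {G : Type u} [Group G] (hfg : Group.FG G) (h : ResiduallyFree G) :
    ∃ (k : ℕ) (H : Fin k → Type) (_ : ∀ i, Group (H i)),
      (∀ i, FullyResiduallyFree (H i)) ∧
      ∃ φ : G →* (∀ i, H i), Function.Injective φ := by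
  classical
  have hbot : clN (⊥ : Subgroup G) = ⊥ := by
    refine le_antisymm ?_ (le_clN _)
    intro g hg
    rw [Subgroup.mem_bot]
    by_contra hg1
    obtain ⟨ι, φ, hφ⟩ := h g hg1
    obtain ⟨ψ, hψ⟩ := exists_factor hfg φ
    have h2 : ψ g = 1 := clN_le_ker ψ bot_le hg
    exact hφ ((hψ g).1 h2)
  obtain ⟨ι, fin, H, φ, hFRF, hcnt, hker⟩ := goodFam_of_closed hfg ⊥ inferInstance hbot
  haveI := fin
  obtain ⟨k, ⟨e⟩⟩ := Finite.exists_equiv_fin ι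
  have hcopy : ∀ j : Fin k, ∃ (Y : Type) (_ : Group Y)
      (f : (H (e.symm j) : Type u) →* Y) (g : Y →* (H (e.symm j) : Type u)),
      (∀ x, g (f x) = x) ∧ (∀ y, f (g y) = y) := by
    intro j
    haveI : Countable (H (e.symm j) : Type u) := hcnt _
    exact exists_small_copy _
  choose Y instY f g hgf hfg' using hcopy
  letI : ∀ j, Group (Y j) := instY
  refine ⟨k, Y, instY, fun j => ?_, ?_⟩
  · exact (hFRF (e.symm j)).of_retract (f j) (g j) (hfg' j)
  · refine ⟨Pi.monoidHom (fun j => (f j).comp (φ (e.symm j))), ?_⟩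
    rw [injective_iff_map_eq_one]
    intro x hx
    have hall : ∀ i, x ∈ (φ i).ker := by
      intro i
      have h1 : (f (e i)) ((φ (e.symm (e i))) x) = 1 := congrFun hx (e i)
      have h2 : φ (e.symm (e i)) x = 1 := by
        have h3 := congrArg (g (e i)) h1
        rw [hgf, map_one] at h3
        exact h3
      rw [MonoidHom.mem_ker, show i = e.symm (e i) from (Equiv.symm_apply_apply e i).symm]
      exact h2
    have hb : x ∈ (⊥ : Subgroup G) := hker ▸ Subgroup.mem_iInf.2 hall
    exact Subgroup.mem_bot.1 hb

/-- Every finitely generated residually free group embeds into a direct product of finitely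
many fully residually free groups. -/
theorem residuallyFree_embeds_product_fullyResiduallyFree
    {G : Type*} [Group G] (hfg : Group.FG G) (h : ResiduallyFree G) :
    ∃ (k : ℕ) (H : Fin k → Type) (_ : ∀ i, Group (H i)),
      (∀ i, FullyResiduallyFree (H i)) ∧
      ∃ φ : G →* (∀ i, H i), Function.Injective φ := by
  exact final_embedding hfg h
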